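/- Let G be a graph, θ a positive integer, (T,𝒳) a θ-smooth tree-cut decomposition of G, and L a θ-cell whose torso has at least 3θ − 2 edges. Let ℮ be the collection of edge-cuts [A,B] of G of order less than θ such that A is incident with at most (order of [A,B]) edges of the torso at L. Then ℮ is an edge-tangle of order θ in G. -/

import Mathlib

/-- A finite multigraph (loops and parallel edges allowed): each edge in `E`
has an unordered pair of endpoints in `V`. -/
structure Multigraph (V E : Type) where
  ends : E → Sym2 V

namespace Multigraph

variable {V E : Type}

/-- The edge `e` has an end in the vertex set `A`. -/
def incident (G : Multigraph V E) (A : Set V) (e : E) : Prop :=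
  ∃ x ∈ G.ends e, x ∈ A

/-- The edge `e` has one end in `A` and one end in `B`. -/
def crosses (G : Multigraph V E) (A B : Set V) (e : E) : Prop :=
  G.incident A e ∧ G.incident B e

/-- The order of the edge-cut `[A,B]`: the number of edges with one end in `A`
and one end in `B`. -/
noncomputable def cutOrder (G : Multigraph V E) (A B : Set V) : ℕ :=
  {e | G.crosses A B e}.ncard

/-- `[A,B]` is an edge-cut of `G`: an ordered pair of disjoint vertex sets
covering all vertices. -/
def IsCut (G : Multigraph V E) (A B : Set V) : Prop :=
  Disjoint A B ∧ A ∪ B = Set.univ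

end Multigraph

/-- An edge-tangle of order `θ` in `G`: a set of edge-cuts of order less than
`θ` satisfying axioms (E1)-(E3). -/
structure EdgeTangle {V E : Type} (G : Multigraph V E) (θ : ℕ) where
  mem : Set V → Set V → Prop
  isCut_of_mem : ∀ A B, mem A B → G.IsCut A B
  order_lt_of_mem : ∀ A B, mem A B → G.cutOrder A B < θ
  e1 : ∀ A B, G.IsCut A B → G.cutOrder A B < θ → mem A B ∨ mem B A
  e2 : ∀ A₁ B₁ A₂ B₂ A₃ B₃, mem A₁ B₁ → mem A₂ B₂ → mem A₃ B₃ →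
    (B₁ ∩ B₂ ∩ B₃).Nonempty
  e3 : ∀ A B, mem A B → θ ≤ {e | G.incident B e}.ncard

/-- A tree-cut decomposition of `G`: a (finite) tree `T` together with pairwise
disjoint bags partitioning `V(G)`. -/
structure TreeCutDecomp {V E : Type} (G : Multigraph V E) (T : Type) where
  tree : SimpleGraph T
  isTree : tree.IsTree
  finite : Finite T
  bag : T → Set V
  disjoint_bags : ∀ s t : T, s ≠ t → Disjoint (bag s) (bag t)
  cover : ∀ v : V, ∃ t : T, v ∈ bag t

namespace TreeCutDecomp

variable {V E T : Type} {G : Multigraph V E}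

/-- The set of nodes of the component of `T - t₁t₂` containing `t₁`. -/
def side (D : TreeCutDecomp G T) (t₁ t₂ : T) : Set T :=
  {s | Relation.ReflTransGen
    (fun x y => D.tree.Adj x y ∧ ¬(x = t₁ ∧ y = t₂) ∧ ¬(x = t₂ ∧ y = t₁)) t₁ s}

/-- The union of the bags over the component of `T - t₁t₂` containing `t₁`. -/
def sideBags (D : TreeCutDecomp G T) (t₁ t₂ : T) : Set V :=
  ⋃ s ∈ D.side t₁ t₂, D.bag s

/-- The adhesion set of the tree edge `t₁t₂`: the edges of `G` with one end in
the bags on the `t₁` side and one end in the bags on the `t₂` side. -/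
def adhEdges (D : TreeCutDecomp G T) (t₁ t₂ : T) : Set E :=
  {e | G.crosses (D.sideBags t₁ t₂) (D.sideBags t₂ t₁) e}

/-- `x` and `y` are joined by a path of `T` avoiding the node set `C`. -/
def compRel (D : TreeCutDecomp G T) (C : Set T) (x y : T) : Prop :=
  Relation.ReflTransGen (fun a b => D.tree.Adj a b ∧ a ∉ C ∧ b ∉ C) x y

/-- The union of the bags over the component of `T - C` containing `s`. -/
def compBags (D : TreeCutDecomp G T) (C : Set T) (s : T) : Set V :=
  ⋃ s' ∈ {s' | D.compRel C s s'}, D.bag s'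

/-- The edges of the torso at `C`, viewed as edges of `G`: those edges having
no component of `T - C` whose bags contain all their ends. -/
def torsoEdges (D : TreeCutDecomp G T) (C : Set T) : Set E :=
  {e | ¬ ∃ s : T, s ∉ C ∧ ∀ x ∈ G.ends e, x ∈ D.compBags C s}

/-- `x` and `y` are joined in the forest obtained from `T` by deleting all edges
whose adhesion set has fewer than `θ` elements. -/
def cellRel (D : TreeCutDecomp G T) (θ : ℕ) (x y : T) : Prop :=
  Relation.ReflTransGen (fun a b => D.tree.Adj a b ∧ θ ≤ (D.adhEdges a b).ncard) x y

/-- A pseudo-`θ`-cell: a component of the forest obtained from `T` by deleting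
all edges whose adhesion set has size less than `θ`. -/
def IsPseudoCell (D : TreeCutDecomp G T) (θ : ℕ) (C : Set T) : Prop :=
  ∃ t : T, C = {s | D.cellRel θ t s}

/-- A `θ`-cell: a pseudo-`θ`-cell whose torso has at least `θ` edges. -/
def IsCell (D : TreeCutDecomp G T) (θ : ℕ) (C : Set T) : Prop :=
  D.IsPseudoCell θ C ∧ θ ≤ (D.torsoEdges C).ncard

/-- `(T,𝒳)` is `θ`-smooth. -/
def Smooth (D : TreeCutDecomp G T) (θ : ℕ) : Prop :=
  ∀ C : Set T, (D.IsCell θ C ∨ ∃ t : T, C = {t}) →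
    ∀ Y Z : Set E, Y ⊆ D.torsoEdges C → Z ⊆ D.torsoEdges C →
      Y.ncard = Z.ncard → Y.ncard ≤ θ →
      ¬ ∃ A B : Set V, G.IsCut A B ∧ G.cutOrder A B < Y.ncard ∧
        (∀ e ∈ Y, G.incident A e) ∧ (∀ e ∈ Z, G.incident B e)

end TreeCutDecomp

/-- Let `G` be a graph, `θ` a positive integer, `(T,𝒳)` a
`θ`-smooth tree-cut decomposition of `G`, and `L` a `θ`-cell whose torso has at
least `3θ − 2` edges. Then the collection of edge-cuts `[A,B]` of `G` of order
less than `θ` such that `A` is incident with at most `|[A,B]|` edges of the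
torso at `L` is an edge-tangle of order `θ` in `G`. -/
theorem fat_cell_edgeTangle {V E T : Type} [Fintype V] [Fintype E]
    (G : Multigraph V E) (θ : ℕ) (hθ : 0 < θ) (D : TreeCutDecomp G T)
    (hsmooth : D.Smooth θ) (L : Set T) (hL : D.IsCell θ L)
    (hfat : 3 * θ - 2 ≤ (D.torsoEdges L).ncard) :
    ∃ ℰ : EdgeTangle G θ, ∀ A B : Set V,
      ℰ.mem A B ↔ (G.IsCut A B ∧ G.cutOrder A B < θ ∧
        {e | e ∈ D.torsoEdges L ∧ G.incident A e}.ncard ≤ G.cutOrder A B) := by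
  classical
  have exmem : ∀ s : Sym2 V, ∃ x, x ∈ s := by
    intro s
    induction s using Sym2.ind with
    | _ a b => exact ⟨a, Sym2.mem_mk_left a b⟩
  have hsym : ∀ A B : Set V, G.cutOrder B A = G.cutOrder A B := by
    intro A B
    unfold Multigraph.cutOrder Multigraph.crosses
    congr 1
    ext e
    exact and_comm
  have hcov : ∀ {A B : Set V} {x : V}, G.IsCut A B → x ∉ A → x ∈ B := by
    intro A B x hcut hx
    have := hcut.2
    have : x ∈ A ∪ B := by rw [this]; trivial
    rcases this with h | h
    · exact absurd h hx
    · exact h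
  refine ⟨⟨fun A B => G.IsCut A B ∧ G.cutOrder A B < θ ∧
      {e | e ∈ D.torsoEdges L ∧ G.incident A e}.ncard ≤ G.cutOrder A B,
    fun A B h => h.1, fun A B h => h.2.1, ?_, ?_, ?_⟩, fun A B => Iff.rfl⟩
  · -- (E1)
    intro A B hcut hlt
    by_contra hcon
    rw [not_or] at hcon
    obtain ⟨hA, hB⟩ := hcon
    have hcutBA : G.IsCut B A := ⟨hcut.1.symm, by rw [Set.union_comm]; exact hcut.2⟩
    have hltBA : G.cutOrder B A < θ := by rw [hsym]; exact hlt
    have hA' : G.cutOrder A B + 1 ≤ {e | e ∈ D.torsoEdges L ∧ G.incident A e}.ncard := by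
      by_contra h
      push_neg at h
      exact hA ⟨hcut, hlt, by omega⟩
    have hB' : G.cutOrder A B + 1 ≤ {e | e ∈ D.torsoEdges L ∧ G.incident B e}.ncard := by
      by_contra h
      push_neg at h
      refine hB ⟨hcutBA, hltBA, ?_⟩
      rw [hsym]; omega
    obtain ⟨Y, hYsub, hYcard⟩ := Set.exists_subset_card_eq hA'
    obtain ⟨Z, hZsub, hZcard⟩ := Set.exists_subset_card_eq hB'
    refine hsmooth L (Or.inl hL) Y Z (fun e he => (hYsub he).1) (fun e he => (hZsub he).1)
      (by rw [hYcard, hZcard]) (by omega)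
      ⟨A, B, hcut, by omega, fun e he => (hYsub he).2, fun e he => (hZsub he).2⟩
  · -- (E2)
    intro A₁ B₁ A₂ B₂ A₃ B₃ h₁ h₂ h₃
    by_contra hcon
    rw [Set.not_nonempty_iff_eq_empty] at hcon
    have hsub : D.torsoEdges L ⊆
        {e | e ∈ D.torsoEdges L ∧ G.incident A₁ e} ∪
        {e | e ∈ D.torsoEdges L ∧ G.incident A₂ e} ∪
        {e | e ∈ D.torsoEdges L ∧ G.incident A₃ e} := by
      intro e he
      obtain ⟨x, hx⟩ := exmem (G.ends e)
      by_cases hx1 : x ∈ A₁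
      · exact Or.inl (Or.inl ⟨he, x, hx, hx1⟩)
      by_cases hx2 : x ∈ A₂
      · exact Or.inl (Or.inr ⟨he, x, hx, hx2⟩)
      by_cases hx3 : x ∈ A₃
      · exact Or.inr ⟨he, x, hx, hx3⟩
      have : x ∈ B₁ ∩ B₂ ∩ B₃ :=
        ⟨⟨hcov h₁.1 hx1, hcov h₂.1 hx2⟩, hcov h₃.1 hx3⟩
      rw [hcon] at this
      exact absurd this (Set.notMem_empty x)
    have hle : (D.torsoEdges L).ncard ≤
        {e | e ∈ D.torsoEdges L ∧ G.incident A₁ e}.ncard +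
        {e | e ∈ D.torsoEdges L ∧ G.incident A₂ e}.ncard +
        {e | e ∈ D.torsoEdges L ∧ G.incident A₃ e}.ncard := by
      refine (Set.ncard_le_ncard hsub (Set.toFinite _)).trans ?_
      refine (Set.ncard_union_le _ _).trans ?_
      exact Nat.add_le_add_right (Set.ncard_union_le _ _) _
    have e1 := h₁.2.2.trans (Nat.le_of_lt_succ (Nat.lt_succ_of_lt h₁.2.1))
    have e2 := h₂.2.2.trans (Nat.le_of_lt_succ (Nat.lt_succ_of_lt h₂.2.1))
    have e3 := h₃.2.2.trans (Nat.le_of_lt_succ (Nat.lt_succ_of_lt h₃.2.1))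
    omega
  · -- (E3)
    intro A B h
    obtain ⟨hcut, hlt, hcard⟩ := h
    have hsub : D.torsoEdges L ⊆
        {e | e ∈ D.torsoEdges L ∧ G.incident A e} ∪ {e | G.incident B e} := by
      intro e he
      obtain ⟨x, hx⟩ := exmem (G.ends e)
      by_cases hxA : x ∈ A
      · exact Or.inl ⟨he, x, hx, hxA⟩
      · exact Or.inr ⟨x, hx, hcov hcut hxA⟩
    have hle : (D.torsoEdges L).ncard ≤
        {e | e ∈ D.torsoEdges L ∧ G.incident A e}.ncard + {e | G.incident B e}.ncard :=
      (Set.ncard_le_ncard hsub (Set.toFinite _)).trans (Set.ncard_union_le _ _)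
    omega
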